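/- arXiv:0906.1743 — 2 statements merged into one kernel-verified Lean document; each statement's English description precedes it below -/
import Mathlib

section
/- Let F_2 be the free group on two generators a, b and let t be the automorphism of F_2 with t(a) = a^2 b and t(b) = a b. Let G = F_2 ⋊_t ℤ be the corresponding semidirect product (the mapping torus of t). Then ⋂_{i≥1} γ_i(G) equals the canonical copy of F_2 inside G; in particular γ_i(G) = F_2 for all i ≥ 2 and G is not residually nilpotent. -/
open SemidirectProduct Subgroup
open scoped commutatorElement

private abbrev Gdef (t : MulAut (FreeGroup (Fin 2))) :=
  FreeGroup (Fin 2) ⋊[zpowersHom _ t] Multiplicative ℤ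

private lemma aux_comm (t : MulAut (FreeGroup (Fin 2)))
    (H : Subgroup (Gdef t)) (x : FreeGroup (Fin 2)) (hx : inl x ∈ H) :
    (inl (x * (t x)⁻¹) : Gdef t) ∈ ⁅H, (⊤ : Subgroup (Gdef t))⁆ := by
  have h : (inl (x * (t x)⁻¹) : Gdef t) =
      ⁅(inl x : Gdef t), (inr (Multiplicative.ofAdd (1:ℤ)) : Gdef t)⁆ := by
    rw [commutatorElement_def]; ext <;> simp
  rw [h]
  exact commutator_mem_commutator hx (mem_top _)

private lemma aux_range_le (t : MulAut (FreeGroup (Fin 2)))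
    (ha : t (FreeGroup.of 0) = FreeGroup.of 0 * FreeGroup.of 0 * FreeGroup.of 1)
    (hb : t (FreeGroup.of 1) = FreeGroup.of 0 * FreeGroup.of 1)
    (H : Subgroup (Gdef t)) (hH : (inl : _ →* Gdef t).range ≤ H) :
    (inl : _ →* Gdef t).range ≤ ⁅H, (⊤ : Subgroup (Gdef t))⁆ := by
  set a : FreeGroup (Fin 2) := FreeGroup.of 0
  set b : FreeGroup (Fin 2) := FreeGroup.of 1
  have hmem : ∀ x : FreeGroup (Fin 2), inl x ∈ H := fun x => hH ⟨x, rfl⟩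
  have hbK : (inl b : Gdef t) ∈ ⁅H, (⊤ : Subgroup (Gdef t))⁆ := by
    have := aux_comm t H (a⁻¹ * b) (hmem _)
    have he : (a⁻¹ * b) * (t (a⁻¹ * b))⁻¹ = b := by
      rw [map_mul, map_inv, ha, hb]; group
    rwa [he] at this
  have hcK : (inl (b⁻¹ * a * b) : Gdef t) ∈ ⁅H, (⊤ : Subgroup (Gdef t))⁆ := by
    have := aux_comm t H b⁻¹ (hmem _)
    have he : b⁻¹ * (t b⁻¹)⁻¹ = b⁻¹ * a * b := by
      rw [map_inv, hb]; group
    rwa [he] at this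
  have haK : (inl a : Gdef t) ∈ ⁅H, (⊤ : Subgroup (Gdef t))⁆ := by
    have h : (inl a : Gdef t) = inl b * inl (b⁻¹ * a * b) * (inl b)⁻¹ := by
      rw [← map_inv, ← map_mul, ← map_mul]; group
    rw [h]
    exact mul_mem (mul_mem hbK hcK) (inv_mem hbK)
  rintro _ ⟨x, rfl⟩
  induction x using FreeGroup.induction_on with
  | C1 => simpa using one_mem _
  | of i =>
      fin_cases i
      · exact haK
      · exact hbK
  | inv_of i h => rw [map_inv]; exact inv_mem h
  | mul x y hx hy => rw [map_mul]; exact mul_mem hx hy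

private lemma aux_lcs (t : MulAut (FreeGroup (Fin 2)))
    (ha : t (FreeGroup.of 0) = FreeGroup.of 0 * FreeGroup.of 0 * FreeGroup.of 1)
    (hb : t (FreeGroup.of 1) = FreeGroup.of 0 * FreeGroup.of 1) :
    ∀ n : ℕ, 1 ≤ n → (⊤ : Subgroup (Gdef t)).lowerCentralSeries n = (inl : _ →* Gdef t).range := by
  have hcomm : commutator (Gdef t) ≤ (inl : _ →* Gdef t).range := by
    rw [range_inl_eq_ker_rightHom]
    exact Abelianization.commutator_subset_ker rightHom
  intro n hn
  induction n with
  | zero => omega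
  | succ n ih =>
    rcases Nat.eq_or_lt_of_le hn with h | h
    · -- n = 0
      have hn0 : n = 0 := by omega
      subst hn0
      rw [Subgroup.top_lowerCentralSeries_one]
      refine le_antisymm hcomm ?_
      have := aux_range_le t ha hb ⊤ le_top
      rwa [← commutator_def] at this
    · have hn1 : 1 ≤ n := by omega
      have ihn := ih hn1
      rw [Subgroup.lowerCentralSeries_succ, ihn]
      refine le_antisymm ?_ (aux_range_le t ha hb _ le_rfl)
      calc ⁅(inl : _ →* Gdef t).range, (⊤ : Subgroup (Gdef t))⁆
          ≤ ⁅(⊤ : Subgroup (Gdef t)), (⊤ : Subgroup (Gdef t))⁆ :=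
            Subgroup.commutator_mono le_top le_rfl
        _ ≤ _ := by rw [← commutator_def]; exact hcomm



/-- let `t` be the automorphism of the free group `F₂ = ⟨a, b⟩` with
`t(a) = a²b` and `t(b) = ab`, and let `G = F₂ ⋊_t ℤ` be the corresponding mapping torus.
Then `⋂_{i ≥ 1} γ_i(G)` is the canonical copy of `F₂` in `G`; in particular
`γ_i(G) = F₂` for all `i ≥ 2` (with `γ₁(G) = G`, i.e. `γ_i(G) = lowerCentralSeries G (i-1)`)
and `G` is not residually nilpotent. -/
theorem mapping_torus_not_residually_nilpotent
    (t : MulAut (FreeGroup (Fin 2)))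
    (ha : t (FreeGroup.of 0) = FreeGroup.of 0 * FreeGroup.of 0 * FreeGroup.of 1)
    (hb : t (FreeGroup.of 1) = FreeGroup.of 0 * FreeGroup.of 1) :
    (∀ i : ℕ, 2 ≤ i →
      (⊤ : Subgroup (FreeGroup (Fin 2) ⋊[zpowersHom _ t] Multiplicative ℤ)).lowerCentralSeries (i - 1) =
        (SemidirectProduct.inl :
          FreeGroup (Fin 2) →* FreeGroup (Fin 2) ⋊[zpowersHom _ t] Multiplicative ℤ).range) ∧
    (⨅ i : ℕ,
      (⊤ : Subgroup (FreeGroup (Fin 2) ⋊[zpowersHom _ t] Multiplicative ℤ)).lowerCentralSeries i) =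
        (SemidirectProduct.inl :
          FreeGroup (Fin 2) →* FreeGroup (Fin 2) ⋊[zpowersHom _ t] Multiplicative ℤ).range ∧
    ¬ (⨅ i : ℕ,
        (⊤ : Subgroup (FreeGroup (Fin 2) ⋊[zpowersHom _ t] Multiplicative ℤ)).lowerCentralSeries i) = ⊥ := by
  have key := aux_lcs t ha hb
  have hinf : (⨅ i : ℕ, (⊤ : Subgroup (Gdef t)).lowerCentralSeries i) = (inl : _ →* Gdef t).range := by
    refine le_antisymm ?_ ?_
    · exact (iInf_le _ 1).trans (key 1 le_rfl).le
    · refine le_iInf fun i => ?_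
      cases i with
      | zero => exact le_top
      | succ n => exact (key (n+1) (Nat.succ_le_succ n.zero_le)).ge
  refine ⟨fun i hi => key (i - 1) (by omega), hinf, ?_⟩
  rw [hinf]
  intro hbot
  have : (inl (FreeGroup.of 0) : Gdef t) ∈ (inl : _ →* Gdef t).range := ⟨_, rfl⟩
  rw [hbot, Subgroup.mem_bot] at this
  have h0 : (FreeGroup.of 0 : FreeGroup (Fin 2)) = 1 := inl_injective (by simpa using this)
  exact FreeGroup.of_ne_one 0 h0
end

section
/- Let n ≥ 1, let φ be an automorphism of the free group F_n on n generators, and let G_φ = F_n ⋊_φ ℤ be the semidirect product where the generator of ℤ acts by φ. Let φ̄ be the automorphism induced by φ on the abelianization F_n^{ab} ≅ ℤ^n. If the additive endomorphism x ↦ φ̄(x) − x of F_n^{ab} is bijective (equivalently, if the matrix A − E is invertible over ℤ, where A is the matrix of φ̄ and E the identity matrix), then γ_i(G_φ) equals the canonical copy of F_n in G_φ for every i ≥ 2; in particular ⋂_{i≥1} γ_i(G_φ) = F_n and G_φ is not residually nilpotent. -/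
open scoped commutatorElement

theorem aux_key (n : ℕ) (φ : MulAut (FreeGroup (Fin n)))
    (hbij : Function.Bijective
      (fun x : Abelianization (FreeGroup (Fin n)) =>
        Abelianization.map φ.toMonoidHom x * x⁻¹)) :
    (SemidirectProduct.inl :
        FreeGroup (Fin n) →* FreeGroup (Fin n) ⋊[zpowersHom _ φ] Multiplicative ℤ).range ≤
      ⁅(SemidirectProduct.inl :
          FreeGroup (Fin n) →* FreeGroup (Fin n) ⋊[zpowersHom _ φ] Multiplicative ℤ).range,
        (⊤ : Subgroup (FreeGroup (Fin n) ⋊[zpowersHom _ φ] Multiplicative ℤ))⁆ := by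
  set F := FreeGroup (Fin n)
  set G := F ⋊[zpowersHom _ φ] Multiplicative ℤ
  set N := (SemidirectProduct.inl : F →* G).range
  set H := ⁅N, (⊤ : Subgroup G)⁆
  set K : Subgroup F := H.comap SemidirectProduct.inl with hK
  have hcomm : commutator F ≤ K := by
    rw [commutator, Subgroup.commutator_le]
    intro f _ g _
    simp only [hK, Subgroup.mem_comap, map_commutatorElement]
    exact Subgroup.commutator_mem_commutator ⟨f, rfl⟩ (Subgroup.mem_top _)
  have htw : ∀ f : F, f * φ f⁻¹ ∈ K := by
    intro f
    have h1 : (SemidirectProduct.inl f : G) ∈ N := ⟨f, rfl⟩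
    have h2 : ⁅(SemidirectProduct.inl f : G),
        (SemidirectProduct.inr (Multiplicative.ofAdd (1:ℤ)) : G)⁆ ∈ H :=
      Subgroup.commutator_mem_commutator h1 (Subgroup.mem_top _)
    have h3 : ⁅(SemidirectProduct.inl f : G),
        (SemidirectProduct.inr (Multiplicative.ofAdd (1:ℤ)) : G)⁆
        = SemidirectProduct.inl (f * φ f⁻¹) := by
      rw [commutatorElement_def]
      ext <;>
        simp [SemidirectProduct.mul_left, SemidirectProduct.mul_right, zpowersHom_apply]
    rw [h3] at h2
    exact h2
  have hmap : Subgroup.map (Abelianization.of (G := F)) K = ⊤ := by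
    rw [eq_top_iff]
    intro y _
    obtain ⟨x, hx⟩ := hbij.2 y⁻¹
    obtain ⟨f, rfl⟩ : ∃ f : F, Abelianization.of f = x := ⟨x.out, QuotientGroup.out_eq' x⟩
    refine ⟨f * φ f⁻¹, htw f, ?_⟩
    have : Abelianization.of (φ f⁻¹) =
        (Abelianization.map φ.toMonoidHom (Abelianization.of f))⁻¹ := by
      rw [Abelianization.map_of]
      simp
    rw [map_mul, this]
    simp only at hx
    rw [← inv_inv y, ← hx]
    group
  have hKtop : K = ⊤ := by
    have := Subgroup.comap_map_eq (Abelianization.of (G := F)) K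
    rw [hmap, Subgroup.comap_top] at this
    have hker : (Abelianization.of (G := F)).ker = commutator F := by
      ext g
      rw [MonoidHom.mem_ker]
      exact QuotientGroup.eq_one_iff g
    rw [hker] at this
    rw [this, sup_of_le_left hcomm]
  rintro _ ⟨f, rfl⟩
  have hf : f ∈ K := by rw [hKtop]; trivial
  exact hf

/-- let `n ≥ 1`, let `φ` be an automorphism of the free group `Fₙ` and let
`G_φ = Fₙ ⋊_φ ℤ`. If the endomorphism `x ↦ φ̄(x) - x` of the abelianization `Fₙᵃᵇ ≅ ℤⁿ`
(written multiplicatively: `x ↦ φ̄(x) * x⁻¹`) is bijective, then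
`γ_i(G_φ) = Fₙ` (the canonical copy of `Fₙ` in `G_φ`) for all `i ≥ 2`; in particular
`⋂_{i ≥ 1} γ_i(G_φ) = Fₙ` and `G_φ` is not residually nilpotent. -/
theorem mapping_torus_not_residually_nilpotent_of_unimodular
    (n : ℕ) (hn : 1 ≤ n) (φ : MulAut (FreeGroup (Fin n)))
    (hbij : Function.Bijective
      (fun x : Abelianization (FreeGroup (Fin n)) =>
        Abelianization.map φ.toMonoidHom x * x⁻¹)) :
    (∀ i : ℕ, 2 ≤ i →
      (⊤ : Subgroup (FreeGroup (Fin n) ⋊[zpowersHom _ φ] Multiplicative ℤ)).lowerCentralSeries (i - 1) =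
        (SemidirectProduct.inl :
          FreeGroup (Fin n) →* FreeGroup (Fin n) ⋊[zpowersHom _ φ] Multiplicative ℤ).range) ∧
    (⨅ i : ℕ,
      (⊤ : Subgroup (FreeGroup (Fin n) ⋊[zpowersHom _ φ] Multiplicative ℤ)).lowerCentralSeries i) =
        (SemidirectProduct.inl :
          FreeGroup (Fin n) →* FreeGroup (Fin n) ⋊[zpowersHom _ φ] Multiplicative ℤ).range ∧
    ¬ (⨅ i : ℕ,
        (⊤ : Subgroup (FreeGroup (Fin n) ⋊[zpowersHom _ φ] Multiplicative ℤ)).lowerCentralSeries i) = ⊥ := by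
  set F := FreeGroup (Fin n)
  set G := F ⋊[zpowersHom _ φ] Multiplicative ℤ with hG
  set N := (SemidirectProduct.inl : F →* G).range with hNdef
  -- the commutator subgroup is contained in N
  have hB : commutator G ≤ N := by
    rw [hNdef, SemidirectProduct.range_inl_eq_ker_rightHom, commutator, Subgroup.commutator_le]
    intro g1 _ g2 _
    rw [MonoidHom.mem_ker, map_commutatorElement]
    exact commutatorElement_eq_one_iff_commute.mpr (mul_comm _ _)
  have hkey := aux_key n φ hbij
  -- every term of index ≥ 1 equals N
  have hstep : ∀ k : ℕ, 1 ≤ k → (⊤ : Subgroup G).lowerCentralSeries k = N := by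
    intro k hk
    induction k with
    | zero => omega
    | succ m ih =>
      rcases Nat.eq_or_lt_of_le hk with h1 | h1
      · -- m = 0
        have hm : m = 0 := by omega
        subst hm
        refine le_antisymm ?_ ?_
        · simpa [Subgroup.top_lowerCentralSeries_one, commutator] using hB
        · exact le_trans hkey (Subgroup.commutator_mono le_top le_rfl)
      · have hm : 1 ≤ m := by omega
        have ihm := ih hm
        have hsucc : (⊤ : Subgroup G).lowerCentralSeries (m + 1) = ⁅(⊤ : Subgroup G).lowerCentralSeries m, ⊤⁆ := rfl
        rw [hsucc, ihm]
        refine le_antisymm ?_ hkey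
        exact le_trans (Subgroup.commutator_mono le_top le_rfl) hB
  have hinf : (⨅ i : ℕ, (⊤ : Subgroup G).lowerCentralSeries i) = N := by
    refine le_antisymm ?_ ?_
    · exact le_trans (iInf_le _ 1) (le_of_eq (hstep 1 le_rfl))
    · refine le_iInf fun i => ?_
      rcases Nat.eq_zero_or_pos i with hi | hi
      · subst hi; exact le_top
      · exact (hstep i hi).ge
  refine ⟨fun i hi => hstep (i - 1) (by omega), hinf, ?_⟩
  rw [hinf]
  intro hbot
  have hmem : (SemidirectProduct.inl (FreeGroup.of ⟨0, hn⟩) : G) ∈ N :=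
    ⟨FreeGroup.of ⟨0, hn⟩, rfl⟩
  rw [hbot, Subgroup.mem_bot] at hmem
  have : FreeGroup.of (⟨0, hn⟩ : Fin n) = 1 :=
    SemidirectProduct.inl_injective (by rw [hmem, map_one])
  exact FreeGroup.of_ne_one _ this
end
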